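/- Let F be a finite field with v elements and t ≥ 2 a natural number. Consider the affine (Frobenius) group action on t-tuples: for a ∈ F, a ≠ 0, and b ∈ F, the pair (a,b) sends a tuple x : Fin t → F to the tuple j ↦ a · x j + b. Then: (1) the set of constant tuples (those x with all coordinates equal) forms a single orbit of size v; (2) every non-constant tuple lies in an orbit of size exactly v(v−1); and (3) the number of orbits consisting of non-constant tuples is exactly (v^(t−1) − 1)/(v − 1). -/

import Mathlib

private lemma orb_eq_range {F : Type} [Field F] {t : ℕ} (x : Fin t → F) :
    {y : Fin t → F | ∃ a b : F, a ≠ 0 ∧ y = fun j => a * x j + b} =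
      Set.range (fun p : Fˣ × F => fun j => (p.1 : F) * x j + p.2) := by
  ext y
  constructor
  · rintro ⟨a, b, ha, rfl⟩; exact ⟨(Units.mk0 a ha, b), rfl⟩
  · rintro ⟨⟨u, b⟩, rfl⟩; exact ⟨u, b, u.ne_zero, rfl⟩

private lemma g_inj {F : Type} [Field F] {t : ℕ} (ht : 2 ≤ t) {x : Fin t → F}
    (hx : ¬ ∃ d : F, x = fun _ => d) :
    Function.Injective (fun p : Fˣ × F => fun j => (p.1 : F) * x j + p.2) := by
  rintro ⟨u, b⟩ ⟨u', b'⟩ h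
  simp only [Prod.mk.injEq] at *
  have h' : ∀ j, (u : F) * x j + b = (u' : F) * x j + b' := fun j => congrFun h j
  by_cases huu : (u : F) = (u' : F)
  · have hb : b = b' := by
      have := h' ⟨0, by omega⟩
      rw [huu] at this
      exact add_left_cancel this
    exact ⟨Units.ext huu, hb⟩
  · exfalso
    apply hx
    refine ⟨(b' - b) / ((u : F) - u'), funext fun j => ?_⟩
    have h1 : ((u : F) - u') * x j = b' - b := by
      have := h' j; ring_nf; linear_combination this
    have hne : (u : F) - u' ≠ 0 := sub_ne_zero.mpr huu
    rw [eq_div_iff hne]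
    linear_combination h1

private lemma orb_eq_of_mem {F : Type} [Field F] {t : ℕ} {x y : Fin t → F}
    (h : y ∈ {z : Fin t → F | ∃ a b : F, a ≠ 0 ∧ z = fun j => a * x j + b}) :
    {z : Fin t → F | ∃ a b : F, a ≠ 0 ∧ z = fun j => a * y j + b} =
      {z : Fin t → F | ∃ a b : F, a ≠ 0 ∧ z = fun j => a * x j + b} := by
  obtain ⟨a, b, ha, rfl⟩ := h
  ext z
  simp only [Set.mem_setOf_eq]
  constructor
  · rintro ⟨a', b', ha', rfl⟩
    exact ⟨a' * a, a' * b + b', mul_ne_zero ha' ha, funext fun j => by ring⟩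
  · rintro ⟨a', b', ha', rfl⟩
    refine ⟨a' / a, b' - a' * b / a, div_ne_zero ha' ha, funext fun j => ?_⟩
    field_simp
    ring

private lemma mem_orb_self {F : Type} [Field F] {t : ℕ} (x : Fin t → F) :
    x ∈ {z : Fin t → F | ∃ a b : F, a ≠ 0 ∧ z = fun j => a * x j + b} :=
  ⟨1, 0, one_ne_zero, funext fun j => by ring⟩

private lemma orb_card {F : Type} [Field F] [Fintype F] {t : ℕ} (ht : 2 ≤ t)
    {x : Fin t → F} (hx : ¬ ∃ d : F, x = fun _ => d) :
    Nat.card {y : Fin t → F | ∃ a b : F, a ≠ 0 ∧ y = fun j => a * x j + b} =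
      Fintype.card F * (Fintype.card F - 1) := by
  classical
  rw [orb_eq_range, Nat.card_range_of_injective (g_inj ht hx)]
  simp [Nat.card_eq_fintype_card, Fintype.card_units, Nat.mul_comm]

theorem stmt_15 (F : Type) [Field F] [Fintype F] (v t : ℕ)
    (hcard : Fintype.card F = v) (ht : 2 ≤ t) :
    ((∀ c : F,
        {y : Fin t → F | ∃ a b : F, a ≠ 0 ∧ y = fun j => a * (fun _ : Fin t => c) j + b} =
          {y : Fin t → F | ∃ d : F, y = fun _ => d}) ∧
      Nat.card {y : Fin t → F | ∃ d : F, y = fun _ => d} = v) ∧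
    (∀ x : Fin t → F, (¬ ∃ d : F, x = fun _ => d) →
      Nat.card {y : Fin t → F | ∃ a b : F, a ≠ 0 ∧ y = fun j => a * x j + b} = v * (v - 1)) ∧
    Nat.card {S : Set (Fin t → F) | ∃ x : Fin t → F, (¬ ∃ d : F, x = fun _ => d) ∧
        S = {y | ∃ a b : F, a ≠ 0 ∧ y = fun j => a * x j + b}} =
      (v ^ (t - 1) - 1) / (v - 1) := by
  classical
  subst hcard
  set v := Fintype.card F with hv
  have hv2 : 2 ≤ v := Fintype.one_lt_card
  have hconst_card : Nat.card {y : Fin t → F | ∃ d : F, y = fun _ => d} = v := by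
    have : {y : Fin t → F | ∃ d : F, y = fun _ => d} =
        Set.range (fun d : F => fun _ : Fin t => d) := by
      ext y; constructor
      · rintro ⟨d, rfl⟩; exact ⟨d, rfl⟩
      · rintro ⟨d, rfl⟩; exact ⟨d, rfl⟩
    rw [this, Nat.card_range_of_injective, Nat.card_eq_fintype_card]
    intro d d' h
    exact congrFun h ⟨0, by omega⟩
  refine ⟨⟨fun c => ?_, hconst_card⟩, fun x hx => orb_card ht hx, ?_⟩
  · ext y
    simp only [Set.mem_setOf_eq]
    constructor
    · rintro ⟨a, b, ha, rfl⟩; exact ⟨a * c + b, rfl⟩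
    · rintro ⟨d, rfl⟩
      exact ⟨1, d - c, one_ne_zero, funext fun j => by ring⟩
  · -- part 3
    set NC : Set (Fin t → F) := {x | ¬ ∃ d : F, x = fun _ => d} with hNC
    set Ω : Set (Set (Fin t → F)) := {S | ∃ x : Fin t → F, (¬ ∃ d : F, x = fun _ => d) ∧
        S = {y | ∃ a b : F, a ≠ 0 ∧ y = fun j => a * x j + b}} with hΩ
    have hNCfin : NC.Finite := Set.toFinite _
    have hΩfin : Ω.Finite := Set.toFinite _
    -- every orbit member of a nonconstant tuple is nonconstant
    have horb_sub : ∀ x : Fin t → F, x ∈ NC →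
        {y : Fin t → F | ∃ a b : F, a ≠ 0 ∧ y = fun j => a * x j + b} ⊆ NC := by
      rintro x hx y ⟨a, b, ha, rfl⟩ ⟨d, hd⟩
      apply hx
      refine ⟨(d - b) / a, funext fun j => ?_⟩
      have := congrFun hd j
      rw [eq_div_iff ha]
      linear_combination this
    -- total count of nonconstant tuples
    have hNCcard : Nat.card NC = v ^ t - v := by
      have h1 : Nat.card NC = Fintype.card {x : Fin t → F // ¬ ∃ d : F, x = fun _ => d} :=
        Nat.card_eq_fintype_card
      rw [h1, Fintype.card_subtype_compl]
      have h2 : Fintype.card {x : Fin t → F // ∃ d : F, x = fun _ => d} = v := by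
        rw [← Nat.card_eq_fintype_card]; exact hconst_card
      rw [h2, Fintype.card_fun, Fintype.card_fin]
    -- fiberwise counting
    have key : (hNCfin.toFinset.card) = (hΩfin.toFinset.card) * (v * (v - 1)) := by
      rw [Finset.card_eq_sum_card_fiberwise
        (f := fun x => {y : Fin t → F | ∃ a b : F, a ≠ 0 ∧ y = fun j => a * x j + b})
        (t := hΩfin.toFinset) ?_]
      · rw [Finset.sum_congr rfl ?_, Finset.sum_const, smul_eq_mul]
        intro S hS
        rw [Set.Finite.mem_toFinset] at hS
        obtain ⟨x0, hx0, rfl⟩ := hS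
        have hfib : (hNCfin.toFinset.filter fun a =>
            {y : Fin t → F | ∃ a' b : F, a' ≠ 0 ∧ y = fun j => a' * a j + b} =
              {y : Fin t → F | ∃ a b : F, a ≠ 0 ∧ y = fun j => a * x0 j + b}) =
            (Set.toFinite {y : Fin t → F | ∃ a b : F, a ≠ 0 ∧ y = fun j => a * x0 j + b}).toFinset := by
          ext z
          simp only [Finset.mem_filter, Set.Finite.mem_toFinset]
          constructor
          · rintro ⟨hz, horb⟩
            rw [← horb]
            exact mem_orb_self z
          · intro hz
            refine ⟨horb_sub x0 hx0 hz, orb_eq_of_mem hz⟩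
        rw [hfib, Set.Finite.card_toFinset, ← Nat.card_eq_fintype_card]
        exact orb_card ht hx0
      · intro x hxmem
        rw [Finset.mem_coe, Set.Finite.mem_toFinset] at hxmem ⊢
        exact ⟨x, hxmem, rfl⟩
    have hNCfinset : hNCfin.toFinset.card = v ^ t - v := by
      rw [Set.Finite.card_toFinset, ← Nat.card_eq_fintype_card]
      exact hNCcard
    have hΩcard : Nat.card Ω = hΩfin.toFinset.card := by
      rw [Nat.card_eq_fintype_card, Set.Finite.card_toFinset]
    rw [hΩcard]
    -- arithmetic
    have hdvd : (v - 1) ∣ v ^ (t - 1) - 1 := by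
      have := Nat.sub_dvd_pow_sub_pow v 1 (t - 1)
      simpa using this
    have hk : (v ^ (t - 1) - 1) / (v - 1) * (v - 1) = v ^ (t - 1) - 1 :=
      Nat.div_mul_cancel hdvd
    have hpow : v ^ t = v * v ^ (t - 1) := by
      conv_lhs => rw [show t = (t - 1) + 1 by omega]
      rw [pow_succ]
      ring
    have heq : hΩfin.toFinset.card * (v * (v - 1)) =
        (v ^ (t - 1) - 1) / (v - 1) * (v * (v - 1)) := by
      rw [← key, hNCfinset]
      have : (v ^ (t - 1) - 1) / (v - 1) * (v * (v - 1)) =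
          (v ^ (t - 1) - 1) / (v - 1) * (v - 1) * v := by ring
      rw [this, hk, hpow, Nat.sub_mul, Nat.one_mul, Nat.mul_comm]
    have hpos : 0 < v * (v - 1) := by
      have : 0 < v - 1 := by omega
      positivity
    exact Nat.eq_of_mul_eq_mul_right hpos heq
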